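/- The integral from 0 to π/4 of ln(cos x - sin x) dx equals -(π/8)·ln 2 - G/2, and the integral from 0 to π/4 of ln(cos x + sin x) dx equals -(π/8)·ln 2 + G/2, where G = ∑_{k=0}^{∞} (-1)^k/(2k+1)^2 is Catalan's constant; consequently the integral from 0 to π/4 of ln(1 + tan x) dx equals (π/8)·ln 2. -/

import Mathlib

open Real Set MeasureTheory intervalIntegral

lemma integrableOn_log_Ioc01 : IntegrableOn Real.log (Ioc (0:ℝ) 1) := by
  have h := intervalIntegral.integrableOn_deriv_of_nonneg (g := fun x => x - x * Real.log x)
      (g' := fun x => -Real.log x) (a := 0) (b := 1)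
      (continuous_id.sub Real.continuous_mul_log).continuousOn
      (fun x hx => by
        simpa using (hasDerivAt_id' x).fun_sub (Real.hasDerivAt_mul_log hx.1.ne'))
      (fun x hx => by
        simpa using (Real.log_nonpos hx.1.le hx.2.le))
  have h2 := h.neg
  have e : (-fun x => -Real.log x) = Real.log := by funext x; simp
  rwa [e] at h2

lemma integrableOn_log_Ioc (c : ℝ) (hc : 0 < c) : IntegrableOn Real.log (Ioc (0:ℝ) c) := by
  rcases le_total c 1 with h | h
  · exact integrableOn_log_Ioc01.mono_set (Ioc_subset_Ioc_right h)
  · have h2 : IntegrableOn Real.log (Ioc (1:ℝ) c) := by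
      have := intervalIntegrable_log (μ := volume) (a := 1) (b := c)
        (by rw [Set.uIcc_of_le h]; intro hmem; exact absurd hmem.1 (by norm_num))
      exact (intervalIntegrable_iff_integrableOn_Ioc_of_le h).1 this
    have : IntegrableOn Real.log (Ioc (0:ℝ) 1 ∪ Ioc 1 c) := integrableOn_log_Ioc01.union h2
    exact this.mono_set (by rw [Set.Ioc_union_Ioc_eq_Ioc (by norm_num) h])

lemma integrableOn_log_sin : IntegrableOn (fun x => Real.log (Real.sin x)) (Ioc (0:ℝ) (π/2)) := by
  have hg : IntegrableOn (fun x => Real.log (π/2) + |Real.log x|) (Ioc (0:ℝ) (π/2)) := by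
    refine (integrableOn_const ?_).add (integrableOn_log_Ioc _ (by positivity)).abs
    simp [Real.volume_Ioc]
  refine Integrable.mono' hg ?_ ?_
  · exact (Real.measurable_log.comp Real.measurable_sin).aestronglyMeasurable
  · rw [ae_restrict_iff' measurableSet_Ioc]
    filter_upwards with x hx
    have hx0 : 0 < x := hx.1
    have hs_pos : 0 < Real.sin x := Real.sin_pos_of_pos_of_lt_pi hx0 (by linarith [Real.pi_pos, hx.2])
    have hlb : 2/π * x ≤ Real.sin x := Real.mul_le_sin hx0.le hx.2
    have h2pi : (0:ℝ) < 2/π := by positivity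
    have hlog1 : Real.log (2/π * x) ≤ Real.log (Real.sin x) :=
      Real.log_le_log (by positivity) hlb
    have hls : Real.log (Real.sin x) ≤ 0 := Real.log_nonpos hs_pos.le (Real.sin_le_one x)
    have hsplit : Real.log (2/π * x) = -Real.log (π/2) + Real.log x := by
      rw [Real.log_mul (by positivity) hx0.ne']
      have : (2:ℝ)/π = (π/2)⁻¹ := by
        field_simp
      rw [this, Real.log_inv]
    have : ‖Real.log (Real.sin x)‖ = -Real.log (Real.sin x) := by
      rw [Real.norm_eq_abs, abs_of_nonpos hls]
    rw [this]
    have : -Real.log (Real.sin x) ≤ Real.log (π/2) - Real.log x := by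
      have := neg_le_neg hlog1
      rw [hsplit] at this
      linarith
    calc -Real.log (Real.sin x) ≤ Real.log (π/2) - Real.log x := this
      _ ≤ Real.log (π/2) + |Real.log x| := by
          have : -Real.log x ≤ |Real.log x| := neg_le_abs _
          linarith

lemma II_log_sin : IntervalIntegrable (fun x => Real.log (Real.sin x)) volume 0 (π/2) :=
  (intervalIntegrable_iff_integrableOn_Ioc_of_le (by positivity)).2 integrableOn_log_sin

lemma II_log_cos : IntervalIntegrable (fun x => Real.log (Real.cos x)) volume 0 (π/2) := by
  have e : (fun x => Real.log (Real.cos x)) = (fun x => Real.log (Real.sin (π/2 - x))) := by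
    funext x; rw [Real.sin_pi_div_two_sub]
  rw [e]
  have := II_log_sin.comp_sub_left (π/2)
  simpa using this.symm

lemma II_log_sin_pi : IntervalIntegrable (fun x => Real.log (Real.sin x)) volume 0 π := by
  refine IntervalIntegrable.trans (b := π/2) II_log_sin ?_
  have e : (fun x => Real.log (Real.sin x)) = (fun x => Real.log (Real.sin (π - x))) := by
    funext x; rw [Real.sin_pi_sub]
  rw [e]
  have := II_log_sin.comp_sub_left π
  simpa [show π - π/2 = π/2 by ring] using this.symm

lemma int_log_cos_eq :
    ∫ x in (0:ℝ)..(π/2), Real.log (Real.cos x) = ∫ x in (0:ℝ)..(π/2), Real.log (Real.sin x) := by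
  have e : (fun x => Real.log (Real.cos x)) = (fun x => Real.log (Real.sin (π/2 - x))) := by
    funext x; rw [Real.sin_pi_div_two_sub]
  rw [e, intervalIntegral.integral_comp_sub_left (fun u => Real.log (Real.sin u)) (π/2)]
  norm_num

lemma J_eq : ∫ x in (0:ℝ)..π, Real.log (Real.sin x)
    = 2 * ∫ x in (0:ℝ)..(π/2), Real.log (Real.sin x) := by
  have hsplit : (∫ x in (0:ℝ)..(π/2), Real.log (Real.sin x))
      + ∫ x in (π/2:ℝ)..π, Real.log (Real.sin x) = ∫ x in (0:ℝ)..π, Real.log (Real.sin x) := by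
    refine intervalIntegral.integral_add_adjacent_intervals II_log_sin ?_
    exact II_log_sin_pi.mono_set (by
      rw [Set.uIcc_of_le (by positivity : (0:ℝ) ≤ π), Set.uIcc_of_le (by linarith [Real.pi_pos] : π/2 ≤ π)]
      exact Set.Icc_subset_Icc (by positivity) le_rfl)
  have h2 : ∫ x in (π/2:ℝ)..π, Real.log (Real.sin x)
      = ∫ x in (0:ℝ)..(π/2), Real.log (Real.sin x) := by
    have e : (fun x => Real.log (Real.sin x)) = (fun x => Real.log (Real.sin (π - x))) := by
      funext x; rw [Real.sin_pi_sub]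
    conv_rhs => rw [e]
    rw [intervalIntegral.integral_comp_sub_left (fun u => Real.log (Real.sin u)) π]
    rw [show π - π/2 = π/2 by ring, sub_zero]
  rw [← hsplit, h2]; ring

lemma I_val : ∫ x in (0:ℝ)..(π/2), Real.log (Real.sin x) = -(π/2) * Real.log 2 := by
  have hhalf : ∫ x in (0:ℝ)..(π/2), Real.log (Real.sin (2*x))
      = ∫ x in (0:ℝ)..(π/2), Real.log (Real.sin x) := by
    rw [intervalIntegral.integral_comp_mul_left (fun u => Real.log (Real.sin u)) (two_ne_zero)]
    rw [mul_zero, show (2:ℝ) * (π/2) = π by ring, J_eq]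
    simp
  have hae : ∫ x in (0:ℝ)..(π/2), Real.log (Real.sin (2*x))
      = ∫ x in (0:ℝ)..(π/2), (Real.log 2 + Real.log (Real.sin x) + Real.log (Real.cos x)) := by
    refine intervalIntegral.integral_congr_ae ?_
    have hne : ∀ᵐ x : ℝ, x ≠ π/2 := by
      refine (ae_iff.2 ?_)
      simpa using (by simp : volume ({π/2} : Set ℝ) = 0)
    filter_upwards [hne] with x hxne hx
    rw [Set.uIoc_of_le (by positivity : (0:ℝ) ≤ π/2)] at hx
    have hx1 : 0 < x := hx.1
    have hx2 : x < π/2 := lt_of_le_of_ne hx.2 hxne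
    have hs : 0 < Real.sin x := Real.sin_pos_of_pos_of_lt_pi hx1 (by linarith [Real.pi_pos])
    have hc : 0 < Real.cos x := Real.cos_pos_of_mem_Ioo ⟨by linarith, hx2⟩
    rw [Real.sin_two_mul, Real.log_mul (by positivity) hc.ne', Real.log_mul (by norm_num) hs.ne']
  have hsplit : ∫ x in (0:ℝ)..(π/2), (Real.log 2 + Real.log (Real.sin x) + Real.log (Real.cos x))
      = (π/2) * Real.log 2 + (∫ x in (0:ℝ)..(π/2), Real.log (Real.sin x))
        + ∫ x in (0:ℝ)..(π/2), Real.log (Real.cos x) := by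
    rw [intervalIntegral.integral_add (IntervalIntegrable.add ?_ II_log_sin) II_log_cos,
      intervalIntegral.integral_add ?_ II_log_sin]
    · simp
    · exact intervalIntegrable_const
    · exact intervalIntegrable_const
  have := hhalf.symm.trans (hae.trans hsplit)
  rw [int_log_cos_eq] at this
  linarith

lemma II_pow_mul_log (k : ℕ) :
    IntegrableOn (fun t => t^(2*k) * Real.log t) (Ioc (0:ℝ) 1) := by
  refine Integrable.mono' integrableOn_log_Ioc01.abs
    ((measurable_id.pow_const _).mul Real.measurable_log).aestronglyMeasurable ?_
  rw [ae_restrict_iff' measurableSet_Ioc]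
  filter_upwards with t ht
  have ht1 : 0 < t := ht.1
  have h1 : t^(2*k) ≤ 1 := pow_le_one₀ ht1.le ht.2
  rw [Real.norm_eq_abs, abs_mul, abs_pow, abs_of_pos ht1]
  calc t^(2*k) * |Real.log t| ≤ 1 * |Real.log t| := by
        have := abs_nonneg (Real.log t); nlinarith
    _ = |Real.log t| := one_mul _

lemma integral_pow_mul_log (k : ℕ) :
    ∫ t in (0:ℝ)..1, t^(2*k) * Real.log t = -(1/(2*(k:ℝ)+1)^2) := by
  set n : ℕ := 2*k with hn
  have hn1 : ((n:ℝ)+1) ≠ 0 := by positivity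
  set F : ℝ → ℝ := fun t => (t^(n+1) * Real.log t)/((n:ℝ)+1) - t^(n+1)/((n:ℝ)+1)^2 with hF
  have hFcont : Continuous F := by
    have e : F = fun t => (t^n * (t * Real.log t))/((n:ℝ)+1) - t^(n+1)/((n:ℝ)+1)^2 := by
      funext t; simp only [hF, pow_succ]; ring
    rw [e]
    exact (((continuous_pow n).mul Real.continuous_mul_log).div_const _).sub
      ((continuous_pow (n+1)).div_const _)
  have hderiv : ∀ t ∈ Ioo (0:ℝ) 1, HasDerivWithinAt F (t^n * Real.log t) (Ioi t) t := by
    intro t ht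
    have h1 : HasDerivAt (fun t : ℝ => t^(n+1) * Real.log t)
        (((n:ℝ)+1) * t^n * Real.log t + t^(n+1) * (1/t)) t := by
      have := (hasDerivAt_pow (n+1) t).mul (Real.hasDerivAt_log ht.1.ne')
      exact this.congr_deriv (by simp [Nat.cast_add])
    have h2 : HasDerivAt F (t^n * Real.log t) t := by
      have := ((h1.div_const ((n:ℝ)+1)).fun_sub ((hasDerivAt_pow (n+1) t).div_const (((n:ℝ)+1)^2)))
      refine this.congr_deriv ?_
      rw [Nat.add_sub_cancel]; push_cast
      field_simp
      rw [pow_succ]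
      field_simp [ht.1.ne']
      ring
    exact h2.hasDerivWithinAt
  have hint : IntervalIntegrable (fun t => t^n * Real.log t) volume 0 1 :=
    (intervalIntegrable_iff_integrableOn_Ioc_of_le zero_le_one).2 (II_pow_mul_log k)
  have := intervalIntegral.integral_eq_sub_of_hasDeriv_right_of_le zero_le_one
    (hFcont.continuousOn) hderiv hint
  rw [this]
  simp only [hF]
  rw [Real.log_one, zero_pow (Nat.succ_ne_zero n)]
  push_cast
  field_simp
  rw [hn]
  push_cast
  ring

lemma summable_inv_sq : Summable (fun k : ℕ => 1/(2*(k:ℝ)+1)^2) := by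
  have h1 : Summable (fun n : ℕ => 1/((n:ℝ)+1)^2) := by
    have := (summable_nat_add_iff (f := fun n : ℕ => 1/(n:ℝ)^2) 1).2
      (summable_one_div_nat_pow.2 one_lt_two)
    simpa using this
  refine Summable.of_nonneg_of_le (fun k => by positivity) (fun k => ?_) h1
  have hk : ((k:ℝ)+1) ≤ 2*(k:ℝ)+1 := by linarith [(Nat.cast_nonneg k : (0:ℝ) ≤ k)]
  have h0 : (0:ℝ) < (k:ℝ)+1 := by positivity
  apply one_div_le_one_div_of_le (by positivity)
  exact pow_le_pow_left₀ h0.le hk 2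

lemma catalan_integral :
    ∫ t in Ioo (0:ℝ) 1, Real.log t / (1 + t^2)
      = -∑' k : ℕ, (-1:ℝ)^k / (2*(k:ℝ)+1)^2 := by
  set μ := volume.restrict (Ioo (0:ℝ) 1) with hμ
  set F : ℕ → ℝ → ℝ := fun k t => ((-1:ℝ)^k * t^(2*k)) * Real.log t with hFdef
  have hIoo : ∀ k : ℕ, IntegrableOn (fun t => t^(2*k) * Real.log t) (Ioo (0:ℝ) 1) :=
    fun k => (II_pow_mul_log k).mono_set Ioo_subset_Ioc_self
  have hint : ∀ k, Integrable (F k) μ := by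
    intro k
    have := ((hIoo k).const_mul ((-1:ℝ)^k))
    refine this.congr ?_
    filter_upwards with t
    simp only [hFdef]; ring
  have hIoo_val : ∀ k : ℕ, ∫ t in Ioo (0:ℝ) 1, t^(2*k) * Real.log t = -(1/(2*(k:ℝ)+1)^2) := by
    intro k
    rw [← MeasureTheory.integral_Ioc_eq_integral_Ioo, ← intervalIntegral.integral_of_le zero_le_one]
    exact integral_pow_mul_log k
  have hval : ∀ k : ℕ, ∫ t, F k t ∂μ = -((-1:ℝ)^k / (2*(k:ℝ)+1)^2) := by
    intro k
    have : ∫ t, F k t ∂μ = ((-1:ℝ)^k) * ∫ t in Ioo (0:ℝ) 1, t^(2*k) * Real.log t := by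
      rw [hμ, ← MeasureTheory.integral_const_mul]
      congr 1; funext t; simp only [hFdef]; ring
    rw [this, hIoo_val k]; ring
  have hnorm : ∀ k : ℕ, ∫ t, ‖F k t‖ ∂μ = 1/(2*(k:ℝ)+1)^2 := by
    intro k
    have he : ∀ t ∈ Ioo (0:ℝ) 1, ‖F k t‖ = -(t^(2*k) * Real.log t) := by
      intro t ht
      have h1 : Real.log t < 0 := Real.log_neg ht.1 ht.2
      have h2 : (0:ℝ) < t^(2*k) := pow_pos ht.1 _
      rw [Real.norm_eq_abs, hFdef]
      simp only []
      rw [abs_mul, abs_mul, abs_pow, abs_neg, abs_one, one_pow, one_mul,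
        abs_of_pos h2, abs_of_neg h1]
      ring
    rw [hμ, MeasureTheory.setIntegral_congr_fun measurableSet_Ioo he,
      MeasureTheory.integral_neg, hIoo_val k]
    ring
  have hsum : Summable (fun k => ∫ t, ‖F k t‖ ∂μ) := by
    apply Summable.congr summable_inv_sq
    intro k; rw [hnorm k]
  have key := MeasureTheory.integral_tsum_of_summable_integral_norm hint hsum
  have hlhs : ∑' k, ∫ t, F k t ∂μ = -∑' k : ℕ, (-1:ℝ)^k / (2*(k:ℝ)+1)^2 := by
    rw [← tsum_neg]
    exact tsum_congr hval
  have hrhs : ∫ t, (∑' k, F k t) ∂μ = ∫ t in Ioo (0:ℝ) 1, Real.log t / (1 + t^2) := by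
    rw [hμ]
    refine MeasureTheory.setIntegral_congr_fun measurableSet_Ioo ?_
    intro t ht
    have ht2 : ‖-t^2‖ < 1 := by
      rw [norm_neg, Real.norm_eq_abs, abs_of_nonneg (sq_nonneg t)]
      nlinarith [ht.1, ht.2]
    have hgeom : ∑' k : ℕ, (-t^2)^k = (1 + t^2)⁻¹ := by
      rw [tsum_geometric_of_norm_lt_one ht2]
      ring_nf
    have he : ∀ k : ℕ, (-t^2)^k * Real.log t = F k t := by
      intro k
      simp only [hFdef]
      rw [neg_pow, ← pow_mul]
    calc ∑' k, F k t = ∑' k : ℕ, (-t^2)^k * Real.log t := tsum_congr (fun k => (he k).symm)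
      _ = (∑' k : ℕ, (-t^2)^k) * Real.log t := tsum_mul_right
      _ = Real.log t / (1 + t^2) := by rw [hgeom]; field_simp
  rw [← hrhs, ← key, hlhs]

lemma log_tan_integral :
    ∫ x in (0:ℝ)..(π/4), (Real.log (Real.sin x) - Real.log (Real.cos x))
      = ∫ t in Ioo (0:ℝ) 1, Real.log t / (1 + t^2) := by
  have hpi : (0:ℝ) < π/4 := by positivity
  have hpi2 : π/4 < π/2 := by linarith [Real.pi_pos]
  set g : ℝ → ℝ := fun t => Real.log t / (1 + t^2) with hg
  have hcos_pos : ∀ x ∈ Icc (0:ℝ) (π/4), 0 < Real.cos x := by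
    intro x hx
    exact Real.cos_pos_of_mem_Ioo ⟨by linarith [hx.1, Real.pi_pos], by linarith [hx.2]⟩
  have huIcc : Set.uIcc (0:ℝ) (π/4) = Icc 0 (π/4) := Set.uIcc_of_le hpi.le
  -- pointwise identity
  have heq : ∀ x ∈ Icc (0:ℝ) (π/4),
      (1/Real.cos x^2) • g (Real.tan x) = Real.log (Real.sin x) - Real.log (Real.cos x) := by
    intro x hx
    rcases eq_or_lt_of_le hx.1 with h0 | h0
    · simp [hg, ← h0, Real.tan_zero]
    · have hc := hcos_pos x hx
      have hs : 0 < Real.sin x := Real.sin_pos_of_pos_of_lt_pi h0 (by linarith [hx.2, Real.pi_pos])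
      have ht : 0 < Real.tan x := Real.tan_pos_of_pos_of_lt_pi_div_two h0 (by linarith [hx.2])
      have hden : 1 + Real.tan x^2 = (Real.cos x^2)⁻¹ := by
        rw [Real.tan_eq_sin_div_cos]
        field_simp
        exact Real.cos_sq_add_sin_sq x
      simp only [hg, smul_eq_mul]
      rw [hden, Real.tan_eq_sin_div_cos, Real.log_div hs.ne' hc.ne']
      field_simp
  -- integrable h on Icc
  have hII : IntervalIntegrable (fun x => Real.log (Real.sin x) - Real.log (Real.cos x))
      volume 0 (π/4) := by
    refine IntervalIntegrable.sub ?_ ?_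
    · exact II_log_sin.mono_set (by
        rw [huIcc, Set.uIcc_of_le (by positivity : (0:ℝ) ≤ π/2)]
        exact Set.Icc_subset_Icc le_rfl hpi2.le)
    · exact II_log_cos.mono_set (by
        rw [huIcc, Set.uIcc_of_le (by positivity : (0:ℝ) ≤ π/2)]
        exact Set.Icc_subset_Icc le_rfl hpi2.le)
  -- tan image bounds
  have htan_mem : ∀ x ∈ Icc (0:ℝ) (π/4), Real.tan x ∈ Icc (0:ℝ) 1 := by
    intro x hx
    constructor
    · exact Real.tan_nonneg_of_nonneg_of_le_pi_div_two hx.1 (by linarith [hx.2])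
    · rw [← Real.tan_pi_div_four]
      rcases eq_or_lt_of_le hx.2 with h | h
      · rw [h]
      · exact (Real.tan_lt_tan_of_nonneg_of_lt_pi_div_two hx.1 hpi2 h).le
  have hInt_g_Icc : IntegrableOn g (Icc (0:ℝ) 1) := by
    rw [integrableOn_Icc_iff_integrableOn_Ioc]
    refine Integrable.mono' integrableOn_log_Ioc01.abs
      ((Real.measurable_log.div ((measurable_const.add
        ((measurable_id.pow_const 2)))) ).aestronglyMeasurable) ?_
    rw [ae_restrict_iff' measurableSet_Ioc]
    filter_upwards with t ht
    have h1 : (1:ℝ) ≤ 1 + t^2 := by nlinarith [sq_nonneg t]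
    rw [hg]
    simp only [Real.norm_eq_abs]
    rw [abs_div, abs_of_pos (by linarith : (0:ℝ) < 1 + t^2)]
    calc |Real.log t| / (1 + t^2) ≤ |Real.log t| / 1 :=
          div_le_div_of_nonneg_left (abs_nonneg _) one_pos h1
      _ = |Real.log t| := div_one _
  -- change of variables
  have hcv := intervalIntegral.integral_comp_smul_deriv''' (a := 0) (b := π/4)
    (f := Real.tan) (f' := fun x => 1/Real.cos x^2) (g := g)
    (by
      rw [huIcc]
      have : ContinuousOn (fun x => Real.sin x / Real.cos x) (Icc (0:ℝ) (π/4)) :=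
        Real.continuous_sin.continuousOn.div Real.continuous_cos.continuousOn
          (fun x hx => (hcos_pos x hx).ne')
      refine this.congr ?_
      intro x _; exact Real.tan_eq_sin_div_cos x)
    (by
      intro x hx
      rw [min_eq_left hpi.le, max_eq_right hpi.le] at hx
      exact (Real.hasDerivAt_tan
        (hcos_pos x (Set.mem_Icc.2 ⟨hx.1.le, hx.2.le⟩)).ne').hasDerivWithinAt)
    (by
      refine ContinuousOn.mono (s := {(0:ℝ)}ᶜ) ?_ ?_
      · exact (Real.continuousOn_log.mono (by simp)).div
          ((continuous_const.add (continuous_pow 2)).continuousOn)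
          (fun t _ => by nlinarith [sq_nonneg t])
      · rw [min_eq_left hpi.le, max_eq_right hpi.le]
        rintro t ⟨x, hx, rfl⟩
        have : 0 < Real.tan x := Real.tan_pos_of_pos_of_lt_pi_div_two hx.1 (by linarith [hx.2])
        simp [this.ne'])
    (by
      refine hInt_g_Icc.mono_set ?_
      rw [huIcc]
      rintro t ⟨x, hx, rfl⟩
      exact htan_mem x hx)
    (by
      rw [huIcc]
      refine ((intervalIntegrable_iff_integrableOn_Icc_of_le hpi.le).1 hII).congr_fun ?_
        measurableSet_Icc
      intro x hx
      exact (heq x hx).symm)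
  rw [Real.tan_zero, Real.tan_pi_div_four] at hcv
  have hL : ∫ x in (0:ℝ)..(π/4), (1/Real.cos x^2) • (g ∘ Real.tan) x
      = ∫ x in (0:ℝ)..(π/4), (Real.log (Real.sin x) - Real.log (Real.cos x)) := by
    refine intervalIntegral.integral_congr ?_
    intro x hx
    rw [huIcc] at hx
    exact heq x hx
  rw [hL] at hcv
  rw [hcv, intervalIntegral.integral_of_le zero_le_one,
    MeasureTheory.integral_Ioc_eq_integral_Ioo]

lemma S_plus_C :
    (∫ x in (0:ℝ)..(π/4), Real.log (Real.sin x)) + ∫ x in (0:ℝ)..(π/4), Real.log (Real.cos x)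
      = -(π/2) * Real.log 2 := by
  have hpi : (0:ℝ) < π/4 := by positivity
  have hsub : Set.uIcc (0:ℝ) (π/4) ⊆ Set.uIcc (0:ℝ) (π/2) := by
    rw [Set.uIcc_of_le hpi.le, Set.uIcc_of_le (by positivity : (0:ℝ) ≤ π/2)]
    exact Set.Icc_subset_Icc le_rfl (by linarith [Real.pi_pos])
  have hIIs := II_log_sin.mono_set hsub
  have hIIc := II_log_cos.mono_set hsub
  have hII2 : IntervalIntegrable (fun x => Real.log (Real.sin (2*x))) volume 0 (π/4) := by
    have := II_log_sin.comp_mul_left (c := 2)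
    simpa [show π/2/2 = π/4 by ring] using this
  have h1 : (∫ x in (0:ℝ)..(π/4), Real.log (Real.sin x)) + ∫ x in (0:ℝ)..(π/4), Real.log (Real.cos x)
      = ∫ x in (0:ℝ)..(π/4), (Real.log (Real.sin x) + Real.log (Real.cos x)) :=
    (intervalIntegral.integral_add hIIs hIIc).symm
  have h2 : ∫ x in (0:ℝ)..(π/4), (Real.log (Real.sin x) + Real.log (Real.cos x))
      = ∫ x in (0:ℝ)..(π/4), (Real.log (Real.sin (2*x)) - Real.log 2) := by
    refine intervalIntegral.integral_congr_ae ?_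
    filter_upwards with x hx
    rw [Set.uIoc_of_le hpi.le] at hx
    have h0 : 0 < x := hx.1
    have hs : 0 < Real.sin x := Real.sin_pos_of_pos_of_lt_pi h0 (by linarith [hx.2, Real.pi_pos])
    have hc : 0 < Real.cos x :=
      Real.cos_pos_of_mem_Ioo ⟨by linarith [Real.pi_pos], by linarith [hx.2, Real.pi_pos]⟩
    have hkey : Real.log (Real.sin (2*x)) = Real.log 2 + Real.log (Real.sin x) + Real.log (Real.cos x) := by
      rw [Real.sin_two_mul, Real.log_mul (by positivity) hc.ne',
        Real.log_mul (by norm_num) hs.ne']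
    show Real.log (Real.sin x) + Real.log (Real.cos x) = Real.log (Real.sin (2*x)) - Real.log 2
    rw [hkey]; ring
  have h3 : ∫ x in (0:ℝ)..(π/4), (Real.log (Real.sin (2*x)) - Real.log 2)
      = (∫ x in (0:ℝ)..(π/4), Real.log (Real.sin (2*x))) - (π/4) * Real.log 2 := by
    rw [intervalIntegral.integral_sub hII2 intervalIntegrable_const,
      intervalIntegral.integral_const, sub_zero, smul_eq_mul]
  have h4 : ∫ x in (0:ℝ)..(π/4), Real.log (Real.sin (2*x)) = -(π/4) * Real.log 2 := by
    rw [intervalIntegral.integral_comp_mul_left (fun u => Real.log (Real.sin u)) two_ne_zero]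
    rw [mul_zero, show (2:ℝ) * (π/4) = π/2 by ring, I_val, smul_eq_mul]
    ring
  rw [h1, h2, h3, h4]
  ring

lemma sqrt_two_sq : Real.sqrt 2 * Real.sqrt 2 = 2 := Real.mul_self_sqrt (by norm_num)

lemma A_eq : ∫ x in (0:ℝ)..(π/4), Real.log (Real.cos x - Real.sin x)
    = (π/8) * Real.log 2 + ∫ x in (0:ℝ)..(π/4), Real.log (Real.sin x) := by
  have hpi : (0:ℝ) < π/4 := by positivity
  have e : (fun x => Real.log (Real.cos x - Real.sin x))
      = fun x => Real.log (Real.sqrt 2 * Real.sin (π/4 - x)) := by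
    funext x
    congr 1
    rw [Real.sin_sub, Real.sin_pi_div_four, Real.cos_pi_div_four]
    have h2 := sqrt_two_sq
    linear_combination (-(Real.cos x - Real.sin x)/2) * h2
  rw [e, intervalIntegral.integral_comp_sub_left (fun u => Real.log (Real.sqrt 2 * Real.sin u)) (π/4)]
  rw [sub_self, sub_zero]
  have h2 : ∫ u in (0:ℝ)..(π/4), Real.log (Real.sqrt 2 * Real.sin u)
      = ∫ u in (0:ℝ)..(π/4), (Real.log (Real.sqrt 2) + Real.log (Real.sin u)) := by
    refine intervalIntegral.integral_congr_ae ?_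
    filter_upwards with u hu
    rw [Set.uIoc_of_le hpi.le] at hu
    have hs : 0 < Real.sin u := Real.sin_pos_of_pos_of_lt_pi hu.1 (by linarith [hu.2, Real.pi_pos])
    exact Real.log_mul (by positivity) hs.ne'
  rw [h2, intervalIntegral.integral_add intervalIntegrable_const (II_log_sin.mono_set (by
    rw [Set.uIcc_of_le hpi.le, Set.uIcc_of_le (by positivity : (0:ℝ) ≤ π/2)]
    exact Set.Icc_subset_Icc le_rfl (by linarith [Real.pi_pos])))]
  rw [intervalIntegral.integral_const, Real.log_sqrt (by norm_num)]
  simp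
  ring

lemma B_eq : ∫ x in (0:ℝ)..(π/4), Real.log (Real.cos x + Real.sin x)
    = (π/8) * Real.log 2 + ∫ x in (0:ℝ)..(π/4), Real.log (Real.cos x) := by
  have hpi : (0:ℝ) < π/4 := by positivity
  have e : (fun x => Real.log (Real.cos x + Real.sin x))
      = fun x => Real.log (Real.sqrt 2 * Real.cos (π/4 - x)) := by
    funext x
    congr 1
    rw [Real.cos_sub, Real.sin_pi_div_four, Real.cos_pi_div_four]
    have h2 := sqrt_two_sq
    linear_combination (-(Real.cos x + Real.sin x)/2) * h2
  rw [e, intervalIntegral.integral_comp_sub_left (fun u => Real.log (Real.sqrt 2 * Real.cos u)) (π/4)]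
  rw [sub_self, sub_zero]
  have h2 : ∫ u in (0:ℝ)..(π/4), Real.log (Real.sqrt 2 * Real.cos u)
      = ∫ u in (0:ℝ)..(π/4), (Real.log (Real.sqrt 2) + Real.log (Real.cos u)) := by
    refine intervalIntegral.integral_congr ?_
    intro u hu
    rw [Set.uIcc_of_le hpi.le] at hu
    have hc : 0 < Real.cos u :=
      Real.cos_pos_of_mem_Ioo ⟨by linarith [Real.pi_pos, hu.1], by linarith [hu.2, Real.pi_pos]⟩
    exact Real.log_mul (by positivity) hc.ne'
  rw [h2, intervalIntegral.integral_add intervalIntegrable_const (II_log_cos.mono_set (by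
    rw [Set.uIcc_of_le hpi.le, Set.uIcc_of_le (by positivity : (0:ℝ) ≤ π/2)]
    exact Set.Icc_subset_Icc le_rfl (by linarith [Real.pi_pos])))]
  rw [intervalIntegral.integral_const, Real.log_sqrt (by norm_num)]
  simp
  ring

lemma third_eq : ∫ x in (0:ℝ)..(π/4), Real.log (1 + Real.tan x)
    = (∫ x in (0:ℝ)..(π/4), Real.log (Real.cos x + Real.sin x))
      - ∫ x in (0:ℝ)..(π/4), Real.log (Real.cos x) := by
  have hpi : (0:ℝ) < π/4 := by positivity
  have hcos_pos : ∀ x ∈ Set.uIcc (0:ℝ) (π/4), 0 < Real.cos x := by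
    intro x hx
    rw [Set.uIcc_of_le hpi.le] at hx
    exact Real.cos_pos_of_mem_Ioo ⟨by linarith [hx.1, Real.pi_pos], by linarith [hx.2, Real.pi_pos]⟩
  have hsum_pos : ∀ x ∈ Set.uIcc (0:ℝ) (π/4), 0 < Real.cos x + Real.sin x := by
    intro x hx
    have hc := hcos_pos x hx
    rw [Set.uIcc_of_le hpi.le] at hx
    have hs : 0 ≤ Real.sin x := Real.sin_nonneg_of_nonneg_of_le_pi hx.1
      (by linarith [hx.2, Real.pi_pos])
    linarith
  have h1 : ∫ x in (0:ℝ)..(π/4), Real.log (1 + Real.tan x)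
      = ∫ x in (0:ℝ)..(π/4), (Real.log (Real.cos x + Real.sin x) - Real.log (Real.cos x)) := by
    refine intervalIntegral.integral_congr ?_
    intro x hx
    have hc := hcos_pos x hx
    have hcs := hsum_pos x hx
    show Real.log (1 + Real.tan x) = Real.log (Real.cos x + Real.sin x) - Real.log (Real.cos x)
    rw [← Real.log_div hcs.ne' hc.ne']
    congr 1
    rw [Real.tan_eq_sin_div_cos]
    field_simp
  rw [h1]
  refine intervalIntegral.integral_sub ?_ ?_
  · refine IntervalIntegrable.log ?_ (fun x hx => (hsum_pos x hx).ne')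
    exact (Real.continuous_cos.add Real.continuous_sin).continuousOn
  · exact II_log_cos.mono_set (by
      rw [Set.uIcc_of_le hpi.le, Set.uIcc_of_le (by positivity : (0:ℝ) ≤ π/2)]
      exact Set.Icc_subset_Icc le_rfl (by linarith [Real.pi_pos]))

/-- GR 4.225.1, 4.225.2 and 4.227.9:
`∫_0^{π/4} ln(cos x - sin x) dx = -(π/8) ln 2 - G/2`,
`∫_0^{π/4} ln(cos x + sin x) dx = -(π/8) ln 2 + G/2`, and
`∫_0^{π/4} ln(1 + tan x) dx = (π/8) ln 2`, where `G` is Catalan's constant. -/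
theorem integral_log_cos_sub_add_sin :
    (∫ x in (0:ℝ)..(Real.pi / 4), Real.log (Real.cos x - Real.sin x) =
      -(Real.pi / 8) * Real.log 2 - (∑' k : ℕ, (-1 : ℝ) ^ k / (2 * (k : ℝ) + 1) ^ 2) / 2) ∧
    (∫ x in (0:ℝ)..(Real.pi / 4), Real.log (Real.cos x + Real.sin x) =
      -(Real.pi / 8) * Real.log 2 + (∑' k : ℕ, (-1 : ℝ) ^ k / (2 * (k : ℝ) + 1) ^ 2) / 2) ∧
    (∫ x in (0:ℝ)..(Real.pi / 4), Real.log (1 + Real.tan x) = (Real.pi / 8) * Real.log 2) := by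
  set G : ℝ := ∑' k : ℕ, (-1 : ℝ) ^ k / (2 * (k : ℝ) + 1) ^ 2 with hG
  set S : ℝ := ∫ x in (0:ℝ)..(π/4), Real.log (Real.sin x) with hS
  set C : ℝ := ∫ x in (0:ℝ)..(π/4), Real.log (Real.cos x) with hC
  have hdiff : S - C = -G := by
    rw [hS, hC, ← intervalIntegral.integral_sub
      (II_log_sin.mono_set (by
        rw [Set.uIcc_of_le (by positivity : (0:ℝ) ≤ π/4), Set.uIcc_of_le (by positivity : (0:ℝ) ≤ π/2)]
        exact Set.Icc_subset_Icc le_rfl (by linarith [Real.pi_pos])))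
      (II_log_cos.mono_set (by
        rw [Set.uIcc_of_le (by positivity : (0:ℝ) ≤ π/4), Set.uIcc_of_le (by positivity : (0:ℝ) ≤ π/2)]
        exact Set.Icc_subset_Icc le_rfl (by linarith [Real.pi_pos])))]
    rw [log_tan_integral, catalan_integral]
  have hsum : S + C = -(π/2) * Real.log 2 := S_plus_C
  have hA := A_eq
  have hB := B_eq
  have h3 := third_eq
  refine ⟨?_, ?_, ?_⟩
  · rw [hA]; rw [← hS]; linarith
  · rw [hB]; rw [← hC]; linarith
  · rw [h3]; rw [hB, ← hC]; linarith
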